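/- In the logistic-selection Gaussian linear model with mean-zero covariates and known propensity score π(x) = σ(ηᵀx), define for each i the random vectors Z¹_i = ((π(X_i) − W_i)/π(X_i)) X_i and Z⁰_i = ((π(X_i) − W_i)/(1 − π(X_i))) X_i, which have mean zero and finite second moments, and let Σ_{Z^w} = E[Z^w_1 (Z^w_1)ᵀ]. Let A_0, A_1 be random vectors in ℝ^d, independent of the data {(X_i, W_i, ε_i)}_{i=1}^n, with E‖A_w‖² < ∞, E[A_w] = β_w, covariance matrices V_w, and Cov((A_1)_j, (A_0)_k) = 0 for all j, k. Define the remainder R = (1/n) ∑_{i=1}^n [ (A_1 − β_1)ᵀ Z¹_i + (A_0 − β_0)ᵀ Z⁰_i ] and the oracle AIPW estimator θ̂_or = (1/n) ∑_{i=1}^n [ (β_1 − β_0)ᵀ X_i + ((W_i − π(X_i))/(π(X_i)(1 − π(X_i)))) (Y_i − β_{W_i}ᵀ X_i) ]. Then: (i) E[R] = 0; (ii) Var(√n · R) = trace(V_1 Σ_{Z¹}) + trace(V_0 Σ_{Z⁰}); and (iii) E[R · θ̂_or] = 0, so R and θ̂_or are uncorrelated. -/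

import Mathlib

open MeasureTheory ProbabilityTheory Matrix

/-- The logistic (sigmoid) function `σ(t) = 1 / (1 + e^{-t})`. -/
noncomputable def logistic (t : ℝ) : ℝ := (1 + Real.exp (-t))⁻¹

/-- The logistic-selection Gaussian linear model: i.i.d. triples `(X i, W i, ε i)`
with `X i ~ N(μX, S)`, `P(W i = 1 | X i = x) = σ(ηᵀ x)`, noise `ε i` of mean `0`
and variance `σ²` independent of `(X i, W i)`, and outcomes
`Y i = β_{W i}ᵀ X i + ε i`. -/
structure LogisticSelectionModel {Ω : Type*} [MeasurableSpace Ω] (P : Measure Ω)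
    (n d : ℕ) (S : Matrix (Fin d) (Fin d) ℝ) (μX η : Fin d → ℝ)
    (β : Fin 2 → Fin d → ℝ) (σ2 : ℝ)
    (X : Fin n → Ω → Fin d → ℝ) (W : Fin n → Ω → Fin 2) (ε : Fin n → Ω → ℝ)
    (Y : Fin n → Ω → ℝ) : Prop where
  prob : IsProbabilityMeasure P
  posdef : S.PosDef
  sigma_pos : 0 < σ2
  measX : ∀ i, Measurable (X i)
  measW : ∀ i, Measurable (W i)
  measEps : ∀ i, Measurable (ε i)
  /-- the triples `(X i, W i, ε i)` are independent across `i` … -/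
  indep : iIndepFun (fun i ω => (X i ω, W i ω, ε i ω)) P
  /-- … and identically distributed -/
  ident : ∀ i j, Measure.map (fun ω => (X i ω, W i ω, ε i ω)) P
      = Measure.map (fun ω => (X j ω, W j ω, ε j ω)) P
  /-- `X i ~ N(μX, S)`: every linear functional of `X i` is real Gaussian with
  mean `aᵀ μX` and variance `aᵀ S a` -/
  gauss : ∀ i (a : Fin d → ℝ),
      Measure.map (fun ω => ∑ k, a k * X i ω k) P
        = gaussianReal (∑ k, a k * μX k) (a ⬝ᵥ S.mulVec a).toNNReal
  /-- `P(W i = 1 | X i) = σ(ηᵀ X i)` -/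
  propScore : ∀ i,
      (P[(fun ω => if W i ω = 1 then (1 : ℝ) else 0) |
          MeasurableSpace.comap (X i) inferInstance])
        =ᵐ[P] fun ω => logistic (∑ k, η k * X i ω k)
  /-- `ε i` is independent of `(X i, W i)` -/
  indepEps : ∀ i, IndepFun (fun ω => (X i ω, W i ω)) (ε i) P
  epsL2 : ∀ i, MemLp (ε i) 2 P
  epsMean : ∀ i, ∫ ω, ε i ω ∂P = 0
  epsVar : ∀ i, ∫ ω, (ε i ω) ^ 2 ∂P = σ2
  Ydef : ∀ i ω, Y i ω = (∑ k, β (W i ω) k * X i ω k) + ε i ω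

variable {Ω : Type*} [MeasurableSpace Ω]

/-- The number of indices `i` with `W i = w`. -/
def Ncount {n : ℕ} (W : Fin n → Ω → Fin 2) (w : Fin 2) (ω : Ω) : ℕ :=
  (Finset.univ.filter fun i => W i ω = w).card

/-- The arm-`w` Gram matrix `∑_{i : W i = w} X i X iᵀ`. -/
noncomputable def gram {n d : ℕ} (X : Fin n → Ω → Fin d → ℝ)
    (W : Fin n → Ω → Fin 2) (w : Fin 2) (ω : Ω) : Matrix (Fin d) (Fin d) ℝ :=
  ∑ i, if W i ω = w then vecMulVec (X i ω) (X i ω) else 0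

/-- The arm-`w` ordinary least squares estimator
`β̂_w = (∑_{i : W i = w} X i X iᵀ)⁻¹ ∑_{i : W i = w} Y i X i`. -/
noncomputable def olsEst {n d : ℕ} (X : Fin n → Ω → Fin d → ℝ)
    (W : Fin n → Ω → Fin 2) (Y : Fin n → Ω → ℝ) (w : Fin 2) (ω : Ω) :
    Fin d → ℝ :=
  (gram X W w ω)⁻¹.mulVec (∑ i, if W i ω = w then (fun k => Y i ω * X i ω k) else 0)

/-- Conditional expectation of `Z` given the event `G`: `E[Z 1_G] / P(G)`. -/
noncomputable def condExpE (P : Measure Ω) (G : Set Ω) (Z : Ω → ℝ) : ℝ :=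
  (∫ ω in G, Z ω ∂P) / (P G).toReal

/-- The centered weighted covariate vector
`Z^w_i = ((π(X i) - W i) / π(X i)) X i` for `w = 1` and
`Z^w_i = ((π(X i) - W i) / (1 - π(X i))) X i` for `w = 0`,
where `π(x) = σ(ηᵀ x)` is the (known) propensity score. -/
noncomputable def Zvec {n d : ℕ} (η : Fin d → ℝ) (X : Fin n → Ω → Fin d → ℝ)
    (W : Fin n → Ω → Fin 2) (w : Fin 2) (i : Fin n) (ω : Ω) : Fin d → ℝ :=
  fun k => (logistic (∑ l, η l * X i ω l) - ((W i ω).val : ℝ)) /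
      (if w = 1 then logistic (∑ l, η l * X i ω l)
        else 1 - logistic (∑ l, η l * X i ω l)) * X i ω k

/-- The remainder `R = n⁻¹ ∑ i ((A 1 - β 1)ᵀ Z¹ i + (A 0 - β 0)ᵀ Z⁰ i)`. -/
noncomputable def Rrem {n d : ℕ} (η : Fin d → ℝ) (X : Fin n → Ω → Fin d → ℝ)
    (W : Fin n → Ω → Fin 2) (A : Fin 2 → Ω → Fin d → ℝ)
    (β : Fin 2 → Fin d → ℝ) (ω : Ω) : ℝ :=
  (n : ℝ)⁻¹ * ∑ i, ((∑ k, (A 1 ω k - β 1 k) * Zvec η X W 1 i ω k)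
    + ∑ k, (A 0 ω k - β 0 k) * Zvec η X W 0 i ω k)

/-- The oracle AIPW estimator
`θ̂ = n⁻¹ ∑ i ((β 1 - β 0)ᵀ X i + ((W i - π(X i))/(π(X i)(1 - π(X i)))) (Y i - β_{W i}ᵀ X i))`. -/
noncomputable def aipwOracle {n d : ℕ} (η : Fin d → ℝ)
    (X : Fin n → Ω → Fin d → ℝ) (W : Fin n → Ω → Fin 2) (Y : Fin n → Ω → ℝ)
    (β : Fin 2 → Fin d → ℝ) (ω : Ω) : ℝ :=
  (n : ℝ)⁻¹ * ∑ i, ((∑ k, (β 1 k - β 0 k) * X i ω k)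
    + (((W i ω).val : ℝ) - logistic (∑ l, η l * X i ω l)) /
        (logistic (∑ l, η l * X i ω l) * (1 - logistic (∑ l, η l * X i ω l)))
      * (Y i ω - ∑ k, β (W i ω) k * X i ω k))

/-! ### Auxiliary lemmas -/

section Aux
open Real
open scoped NNReal ENNReal

lemma logistic_pos (t : ℝ) : 0 < logistic t := by
  unfold logistic; positivity

lemma logistic_lt_one (t : ℝ) : logistic t < 1 := by
  unfold logistic
  rw [inv_lt_one_iff₀]
  right; linarith [Real.exp_pos (-t)]

lemma inv_logistic (t : ℝ) : (logistic t)⁻¹ = 1 + Real.exp (-t) := by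
  unfold logistic; rw [inv_inv]

lemma one_sub_logistic (t : ℝ) : 1 - logistic t = (1 + Real.exp t)⁻¹ := by
  unfold logistic
  have h1 : (0:ℝ) < 1 + Real.exp (-t) := by positivity
  have h2 : (0:ℝ) < 1 + Real.exp t := by positivity
  field_simp
  have he : Real.exp (-t) * Real.exp t = 1 := by rw [← Real.exp_add]; simp
  linear_combination he

lemma one_sub_logistic_pos (t : ℝ) : 0 < 1 - logistic t := by
  linarith [logistic_lt_one t]

lemma inv_one_sub_logistic (t : ℝ) : (1 - logistic t)⁻¹ = 1 + Real.exp t := by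
  rw [one_sub_logistic, inv_inv]

lemma continuous_logistic : Continuous logistic := by
  unfold logistic
  refine Continuous.inv₀ (by continuity) (fun t => by positivity)

lemma measurable_logistic : Measurable logistic := continuous_logistic.measurable

lemma cube_bound {a b c : ℝ} (ha : 0 ≤ a) (hb : 0 ≤ b) (hc : 0 ≤ c) :
    a * b * c ≤ a ^ 3 + b ^ 3 + c ^ 3 := by
  nlinarith [sq_nonneg (a-b), sq_nonneg (b-c), sq_nonneg (a-c), sq_nonneg (a+b+c),
    mul_nonneg ha hb, mul_nonneg hb hc, mul_nonneg ha hc, sq_nonneg (a+b-c),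
    sq_nonneg (a-b+c), sq_nonneg (a-b-c)]

lemma integrable_exp_mul_gaussianReal (c μ : ℝ) (v : ℝ≥0) :
    Integrable (fun x => Real.exp (c * x)) (gaussianReal μ v) := by
  have hm : Measurable fun x : ℝ => Real.exp (c * x) := (measurable_id.const_mul c).exp
  by_cases hv : v = 0
  · subst hv
    rw [gaussianReal_zero_var]
    refine ⟨hm.aestronglyMeasurable, ?_⟩
    show (∫⁻ x, ‖Real.exp (c * x)‖ₑ ∂(Measure.dirac μ)) < ⊤
    rw [lintegral_dirac' _ hm.enorm]
    exact enorm_lt_top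
  · rw [gaussianReal_of_var_ne_zero μ hv]
    rw [integrable_withDensity_iff (measurable_gaussianPDF μ v)
      (ae_of_all _ fun x => ENNReal.ofReal_lt_top)]
    have hVpos : (0:ℝ) < (v:ℝ) := by positivity
    set V : ℝ := (v : ℝ) with hVdef
    set b : ℝ := (2*V)⁻¹ with hbdef
    set r : ℝ := μ + c*V with hrdef
    have hb : 0 < b := by positivity
    set K : ℝ := (Real.sqrt (2 * π * V))⁻¹ with hKdef
    have key : ∀ x : ℝ, Real.exp (c * x) * (gaussianPDF μ v x).toReal
        = (K * Real.exp (b*r^2 - b*μ^2)) * Real.exp (-b*(x-r)^2) := by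
      intro x
      rw [gaussianPDF, ENNReal.toReal_ofReal (gaussianPDFReal_nonneg μ v x), gaussianPDFReal]
      have hC : (Real.sqrt (2 * (π * (v:ℝ))))⁻¹ = K := by rw [hKdef, hVdef]; ring_nf
      rw [show 2 * π * (v:ℝ) = 2 * (π * (v:ℝ)) by ring, hC]
      rw [mul_left_comm, ← Real.exp_add, mul_assoc, ← Real.exp_add]
      congr 1
      have hVne : V ≠ 0 := hVpos.ne'
      have hvne : (v:ℝ) ≠ 0 := hVpos.ne'
      rw [hbdef, hrdef, hVdef]
      field_simp
      ring
    have H : Integrable (fun x => (K * Real.exp (b*r^2 - b*μ^2)) * Real.exp (-b*(x-r)^2)) := by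
      have h0 : Integrable (fun x : ℝ => Real.exp (-b*x^2)) := integrable_exp_neg_mul_sq hb
      exact (h0.comp_sub_right r).const_mul _
    exact H.congr (ae_of_all _ fun x => (key x).symm)

lemma integrable_pow_abs_gaussianReal (μ : ℝ) (v : ℝ≥0) (m : ℕ) :
    Integrable (fun x => |x|^m) (gaussianReal μ v) := by
  have h1 := integrable_exp_mul_gaussianReal 1 μ v
  have h2 := integrable_exp_mul_gaussianReal (-1) μ v
  refine Integrable.mono' (((h1.add h2).const_mul (m.factorial : ℝ))) (by measurability)
    (ae_of_all _ fun x => ?_)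
  have habs : |x|^m ≤ (m.factorial : ℝ) * Real.exp |x| := by
    have h3 : |x|^m / (m.factorial : ℝ) ≤ Real.exp |x| := by
      refine le_trans ?_ (Real.sum_le_exp_of_nonneg (abs_nonneg x) (m+1))
      refine Finset.single_le_sum (f := fun i => |x|^i / (i.factorial : ℝ))
        (fun i _ => by positivity) (Finset.self_mem_range_succ m)
    calc |x|^m = (m.factorial : ℝ) * (|x|^m / (m.factorial : ℝ)) := by
          field_simp
      _ ≤ (m.factorial : ℝ) * Real.exp |x| := by
          exact mul_le_mul_of_nonneg_left h3 (by positivity)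
  have hexp : Real.exp |x| ≤ Real.exp (1*x) + Real.exp ((-1)*x) := by
    rcases abs_cases x with ⟨h, _⟩ | ⟨h, _⟩
    · rw [h]; simp; linarith [Real.exp_pos (-x)]
    · rw [h]; simp; linarith [Real.exp_pos x]
  have hn : ‖|x|^m‖ = |x|^m := by
    rw [Real.norm_eq_abs, abs_of_nonneg (by positivity)]
  rw [hn]
  calc |x|^m ≤ (m.factorial : ℝ) * Real.exp |x| := habs
    _ ≤ (m.factorial : ℝ) * (Real.exp (1*x) + Real.exp ((-1)*x)) := by
        exact mul_le_mul_of_nonneg_left hexp (by positivity)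
    _ = (m.factorial : ℝ) * (fun x => Real.exp (1*x) + Real.exp ((-1)*x)) x := rfl

lemma integrable_comp_of_map_gauss {Ω : Type*} [MeasurableSpace Ω] {P : Measure Ω} {g : Ω → ℝ}
    (hg : Measurable g) {μ : ℝ} {v : ℝ≥0} (hmap : Measure.map g P = gaussianReal μ v)
    {φ : ℝ → ℝ} (hφ : Measurable φ) (hint : Integrable φ (gaussianReal μ v)) :
    Integrable (fun ω => φ (g ω)) P := by
  have h := (integrable_map_measure hφ.aestronglyMeasurable hg.aemeasurable).mp
    (by rw [hmap]; exact hint)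
  exact h

/-- L2 × L2 → L1. -/
lemma L2mul {Ω : Type*} [MeasurableSpace Ω] {P : Measure Ω} {f g : Ω → ℝ}
    (hf : MemLp f 2 P) (hg : MemLp g 2 P) : Integrable (fun ω => f ω * g ω) P := by
  refine Integrable.mono' (((hf.integrable_sq.add hg.integrable_sq).const_mul (2:ℝ)⁻¹))
    (hf.aestronglyMeasurable.mul hg.aestronglyMeasurable) (ae_of_all _ fun ω => ?_)
  rw [Real.norm_eq_abs, abs_mul]
  simp only [Pi.add_apply]
  nlinarith [sq_nonneg (|f ω| - |g ω|), abs_nonneg (f ω), abs_nonneg (g ω),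
    sq_abs (f ω), sq_abs (g ω)]

end Aux

section Aux2
open Real
open scoped NNReal ENNReal

variable {d : ℕ}

/-- envelope function -/
noncomputable def Gfun (η : Fin d → ℝ) (x : Fin d → ℝ) : ℝ :=
  Real.exp (∑ l, η l * x l) + Real.exp (-∑ l, η l * x l) + 2

/-- the Z function on the sample space of a single triple -/
noncomputable def zf (η : Fin d → ℝ) (w : Fin 2) (j : Fin d)
    (p : (Fin d → ℝ) × Fin 2 × ℝ) : ℝ :=
  (logistic (∑ l, η l * p.1 l) - ((p.2.1).val : ℝ)) /
      (if w = 1 then logistic (∑ l, η l * p.1 l)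
        else 1 - logistic (∑ l, η l * p.1 l)) * p.1 j

/-- the AIPW weight function -/
noncomputable def hwf (η : Fin d → ℝ) (p : (Fin d → ℝ) × Fin 2 × ℝ) : ℝ :=
  (((p.2.1).val : ℝ) - logistic (∑ l, η l * p.1 l)) /
    (logistic (∑ l, η l * p.1 l) * (1 - logistic (∑ l, η l * p.1 l)))

/-- the AIPW summand function -/
noncomputable def Dfun (η : Fin d → ℝ) (β : Fin 2 → Fin d → ℝ)
    (p : (Fin d → ℝ) × Fin 2 × ℝ) : ℝ :=
  (∑ k, (β 1 k - β 0 k) * p.1 k) + hwf η p * p.2.2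

lemma Gfun_pos (η x : Fin d → ℝ) : 0 < Gfun η x := by unfold Gfun; positivity

lemma measurable_tsum (η : Fin d → ℝ) :
    Measurable (fun p : (Fin d → ℝ) × Fin 2 × ℝ => ∑ l, η l * p.1 l) := by
  exact Finset.measurable_sum _ fun l _ =>
    (measurable_const.mul ((measurable_pi_apply l).comp measurable_fst))

lemma measurable_valR : Measurable (fun p : (Fin d → ℝ) × Fin 2 × ℝ => ((p.2.1).val : ℝ)) := by
  exact (measurable_of_countable (fun w : Fin 2 => ((w.val : ℕ) : ℝ))).comp
    (measurable_fst.comp measurable_snd)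

lemma measurable_zf (η : Fin d → ℝ) (w : Fin 2) (j : Fin d) : Measurable (zf η w j) := by
  unfold zf
  refine Measurable.mul (Measurable.div ?_ ?_) ((measurable_pi_apply j).comp measurable_fst)
  · exact (measurable_logistic.comp (measurable_tsum η)).sub measurable_valR
  · split
    · exact measurable_logistic.comp (measurable_tsum η)
    · exact measurable_const.sub (measurable_logistic.comp (measurable_tsum η))

lemma measurable_hwf (η : Fin d → ℝ) : Measurable (hwf η) := by
  unfold hwf
  refine Measurable.div (measurable_valR.sub (measurable_logistic.comp (measurable_tsum η))) ?_
  exact (measurable_logistic.comp (measurable_tsum η)).mul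
    (measurable_const.sub (measurable_logistic.comp (measurable_tsum η)))

lemma measurable_Dfun (η : Fin d → ℝ) (β : Fin 2 → Fin d → ℝ) : Measurable (Dfun η β) := by
  unfold Dfun
  refine Measurable.add ?_ ((measurable_hwf η).mul (measurable_snd.comp measurable_snd))
  exact Finset.measurable_sum _ fun k _ =>
    (measurable_const.mul ((measurable_pi_apply k).comp measurable_fst))

lemma val_cases (w : Fin 2) : ((w.val : ℕ) : ℝ) = 0 ∨ ((w.val : ℕ) : ℝ) = 1 := by
  fin_cases w <;> simp

lemma abs_num_le (η : Fin d → ℝ) (p : (Fin d → ℝ) × Fin 2 × ℝ) :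
    |logistic (∑ l, η l * p.1 l) - ((p.2.1).val : ℝ)| ≤ 1 := by
  set t := ∑ l, η l * p.1 l
  have h1 := logistic_pos t
  have h2 := logistic_lt_one t
  rcases val_cases p.2.1 with h | h <;> rw [h] <;> rw [abs_le] <;> constructor <;> linarith

lemma inv_denom_le (η : Fin d → ℝ) (w : Fin 2) (p : (Fin d → ℝ) × Fin 2 × ℝ) :
    ((if w = 1 then logistic (∑ l, η l * p.1 l)
      else 1 - logistic (∑ l, η l * p.1 l)))⁻¹ ≤ Gfun η p.1 := by
  set t := ∑ l, η l * p.1 l with ht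
  unfold Gfun
  rw [← ht]
  split
  · rw [inv_logistic]
    linarith [Real.exp_pos t]
  · rw [inv_one_sub_logistic]
    linarith [Real.exp_pos (-t)]

lemma denom_pos (η : Fin d → ℝ) (w : Fin 2) (p : (Fin d → ℝ) × Fin 2 × ℝ) :
    0 < (if w = 1 then logistic (∑ l, η l * p.1 l)
      else 1 - logistic (∑ l, η l * p.1 l)) := by
  split
  · exact logistic_pos _
  · exact one_sub_logistic_pos _

lemma abs_zf_le (η : Fin d → ℝ) (w : Fin 2) (j : Fin d) (p : (Fin d → ℝ) × Fin 2 × ℝ) :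
    |zf η w j p| ≤ Gfun η p.1 * |p.1 j| := by
  unfold zf
  rw [abs_mul]
  refine mul_le_mul_of_nonneg_right ?_ (abs_nonneg _)
  rw [abs_div, abs_of_pos (denom_pos η w p)]
  rw [div_le_iff₀ (denom_pos η w p)]
  calc |logistic (∑ l, η l * p.1 l) - ((p.2.1).val : ℝ)| ≤ 1 := abs_num_le η p
    _ ≤ Gfun η p.1 * (if w = 1 then logistic (∑ l, η l * p.1 l)
        else 1 - logistic (∑ l, η l * p.1 l)) := by
        have h := mul_le_mul_of_nonneg_right (inv_denom_le η w p) (le_of_lt (denom_pos η w p))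
        rwa [inv_mul_cancel₀ (ne_of_gt (denom_pos η w p))] at h

lemma abs_hwf_le (η : Fin d → ℝ) (p : (Fin d → ℝ) × Fin 2 × ℝ) :
    |hwf η p| ≤ Gfun η p.1 ^ 2 := by
  unfold hwf
  set t := ∑ l, η l * p.1 l with ht
  have h1 := logistic_pos t
  have h2 := one_sub_logistic_pos t
  have hd : 0 < logistic t * (1 - logistic t) := mul_pos h1 h2
  rw [abs_div, abs_of_pos hd, div_le_iff₀ hd]
  have hnum : |((p.2.1).val : ℝ) - logistic t| ≤ 1 := by
    rw [abs_sub_comm]; exact abs_num_le η p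
  calc |((p.2.1).val : ℝ) - logistic t| ≤ 1 := hnum
    _ ≤ Gfun η p.1 ^ 2 * (logistic t * (1 - logistic t)) := by
        have e1 : (logistic t)⁻¹ ≤ Gfun η p.1 := by
          have := inv_denom_le η 1 p; simpa using this
        have e2 : (1 - logistic t)⁻¹ ≤ Gfun η p.1 := by
          have := inv_denom_le η 0 p; simpa using this
        have : (logistic t * (1 - logistic t))⁻¹ ≤ Gfun η p.1 ^ 2 := by
          rw [mul_inv]
          calc (logistic t)⁻¹ * (1 - logistic t)⁻¹ ≤ Gfun η p.1 * Gfun η p.1 := by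
                exact mul_le_mul e1 e2 (by positivity) (le_of_lt (lt_of_lt_of_le (by positivity) e1))
            _ = Gfun η p.1 ^ 2 := by ring
        have h := mul_le_mul_of_nonneg_right this (le_of_lt hd)
        rwa [inv_mul_cancel₀ (ne_of_gt hd)] at h

end Aux2
section Aux3
open Real
open scoped NNReal ENNReal

variable {Ω : Type*} [MeasurableSpace Ω] {d : ℕ}

lemma master_int {P : Measure Ω} {Xf : Ω → Fin d → ℝ}
    (hXm : Measurable Xf) (η : Fin d → ℝ)
    (hg : ∀ a : Fin d → ℝ, ∃ μ v, Measure.map (fun ω => ∑ l, a l * Xf ω l) P = gaussianReal μ v)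
    (p q r : ℕ) (j k : Fin d) :
    Integrable (fun ω => Gfun η (Xf ω) ^ p * |Xf ω j| ^ q * |Xf ω k| ^ r) P := by
  set t : Ω → ℝ := fun ω => ∑ l, η l * Xf ω l with htdef
  have htm : Measurable t := Finset.measurable_sum _ fun l _ =>
    (measurable_const.mul hXm.eval)
  have hexp : ∀ c : ℝ, Integrable (fun ω => Real.exp (c * t ω)) P := by
    intro c
    obtain ⟨μ, v, hmap⟩ := hg η
    exact integrable_comp_of_map_gauss htm hmap ((measurable_id.const_mul c).exp)
      (integrable_exp_mul_gaussianReal c μ v)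
  have hXj : ∀ (j : Fin d) (m : ℕ), Integrable (fun ω => |Xf ω j| ^ m) P := by
    intro j m
    obtain ⟨μ, v, hmap⟩ := hg (Pi.single j 1)
    have hsm : Measurable (fun ω => ∑ l, (Pi.single j (1:ℝ) : Fin d → ℝ) l * Xf ω l) := by
      fun_prop
    have h := integrable_comp_of_map_gauss hsm hmap
      ((measurable_id.abs).pow_const m) (integrable_pow_abs_gaussianReal μ v m)
    refine h.congr (ae_of_all _ fun ω => ?_)
    congr 1
    simp [Pi.single_apply, ite_mul, Finset.sum_ite_eq']
  set c : ℝ := ((p*3 : ℕ) : ℝ) with hcdef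
  have hBd : Integrable (fun ω => (4:ℝ)^(p*3) * (Real.exp (c * t ω) + Real.exp ((-c) * t ω))
      + (|Xf ω j|^(q*3) + |Xf ω k|^(r*3))) P :=
    (((hexp c).add (hexp (-c))).const_mul _).add ((hXj j _).add (hXj k _))
  refine Integrable.mono' hBd ?_ (ae_of_all _ fun ω => ?_)
  · refine AEStronglyMeasurable.mul (AEStronglyMeasurable.mul ?_ ?_) ?_
    · exact ((((htm.exp).add ((htm.neg).exp)).add measurable_const).pow_const p).aestronglyMeasurable
    · exact (hXm.eval.abs.pow_const q).aestronglyMeasurable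
    · exact (hXm.eval.abs.pow_const r).aestronglyMeasurable
  · set G : ℝ := Gfun η (Xf ω) with hGdef
    have hGpos : 0 < G := Gfun_pos η (Xf ω)
    have hfnn : 0 ≤ G ^ p * |Xf ω j| ^ q * |Xf ω k| ^ r := by positivity
    rw [Real.norm_eq_abs, abs_of_nonneg hfnn]
    have step1 : G ^ p * |Xf ω j| ^ q * |Xf ω k| ^ r
        ≤ G^(p*3) + |Xf ω j|^(q*3) + |Xf ω k|^(r*3) := by
      have := cube_bound (a := G^p) (b := |Xf ω j|^q) (c := |Xf ω k|^r)
        (by positivity) (by positivity) (by positivity)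
      simpa [← pow_mul] using this
    have hG4 : G ≤ 4 * Real.exp |t ω| := by
      have h1 : Real.exp (t ω) ≤ Real.exp |t ω| := Real.exp_le_exp.mpr (le_abs_self _)
      have h2 : Real.exp (-t ω) ≤ Real.exp |t ω| := Real.exp_le_exp.mpr (neg_le_abs _)
      have h3 : (1:ℝ) ≤ Real.exp |t ω| := Real.one_le_exp (abs_nonneg _)
      have hGe : G = Real.exp (t ω) + Real.exp (-t ω) + 2 := rfl
      rw [hGe]; linarith
    have step2 : G^(p*3) ≤ (4:ℝ)^(p*3) * (Real.exp (c * t ω) + Real.exp ((-c) * t ω)) := by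
      calc G^(p*3) ≤ (4 * Real.exp |t ω|)^(p*3) :=
            pow_le_pow_left₀ (le_of_lt hGpos) hG4 _
        _ = (4:ℝ)^(p*3) * Real.exp ((p*3 : ℕ) * |t ω|) := by
            rw [mul_pow, ← Real.exp_nat_mul]
        _ ≤ (4:ℝ)^(p*3) * (Real.exp (c * t ω) + Real.exp ((-c) * t ω)) := by
            refine mul_le_mul_of_nonneg_left ?_ (by positivity)
            rcases abs_cases (t ω) with ⟨h, _⟩ | ⟨h, _⟩
            · rw [h, hcdef]
              exact le_add_of_nonneg_right (le_of_lt (Real.exp_pos _))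
            · rw [h, hcdef]
              rw [show ((p*3 : ℕ) : ℝ) * -t ω = (-((p*3 : ℕ) : ℝ)) * t ω by ring]
              exact le_add_of_nonneg_left (le_of_lt (Real.exp_pos _))
    linarith

lemma master_int_G {P : Measure Ω} {Xf : Ω → Fin d → ℝ}
    (hXm : Measurable Xf) (η : Fin d → ℝ)
    (hg : ∀ a : Fin d → ℝ, ∃ μ v, Measure.map (fun ω => ∑ l, a l * Xf ω l) P = gaussianReal μ v)
    (p : ℕ) : Integrable (fun ω => Gfun η (Xf ω) ^ p) P := by
  set t : Ω → ℝ := fun ω => ∑ l, η l * Xf ω l with htdef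
  have htm : Measurable t := Finset.measurable_sum _ fun l _ =>
    (measurable_const.mul (hXm.eval (a := l)))
  have hexp : ∀ c : ℝ, Integrable (fun ω => Real.exp (c * t ω)) P := by
    intro c
    obtain ⟨μ, v, hmap⟩ := hg η
    exact integrable_comp_of_map_gauss htm hmap ((measurable_id.const_mul c).exp)
      (integrable_exp_mul_gaussianReal c μ v)
  set c : ℝ := ((p : ℕ) : ℝ) with hcdef
  have hBd : Integrable (fun ω => (4:ℝ)^p * (Real.exp (c * t ω) + Real.exp ((-c) * t ω))) P :=
    ((hexp c).add (hexp (-c))).const_mul _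
  refine Integrable.mono' hBd ?_ (ae_of_all _ fun ω => ?_)
  · exact ((((htm.exp).add ((htm.neg).exp)).add measurable_const).pow_const p).aestronglyMeasurable
  · set G : ℝ := Gfun η (Xf ω) with hGdef
    have hGpos : 0 < G := Gfun_pos η (Xf ω)
    rw [Real.norm_eq_abs, abs_of_nonneg (by positivity)]
    have hG4 : G ≤ 4 * Real.exp |t ω| := by
      have h1 : Real.exp (t ω) ≤ Real.exp |t ω| := Real.exp_le_exp.mpr (le_abs_self _)
      have h2 : Real.exp (-t ω) ≤ Real.exp |t ω| := Real.exp_le_exp.mpr (neg_le_abs _)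
      have h3 : (1:ℝ) ≤ Real.exp |t ω| := Real.one_le_exp (abs_nonneg _)
      have hGe : G = Real.exp (t ω) + Real.exp (-t ω) + 2 := rfl
      rw [hGe]; linarith
    calc G^p ≤ (4 * Real.exp |t ω|)^p := pow_le_pow_left₀ (le_of_lt hGpos) hG4 _
      _ = (4:ℝ)^p * Real.exp ((p : ℕ) * |t ω|) := by rw [mul_pow, ← Real.exp_nat_mul]
      _ ≤ (4:ℝ)^p * (Real.exp (c * t ω) + Real.exp ((-c) * t ω)) := by
          refine mul_le_mul_of_nonneg_left ?_ (by positivity)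
          rcases abs_cases (t ω) with ⟨h, _⟩ | ⟨h, _⟩
          · rw [h, hcdef]
            exact le_add_of_nonneg_right (le_of_lt (Real.exp_pos _))
          · rw [h, hcdef]
            rw [show ((p : ℕ) : ℝ) * -t ω = (-((p : ℕ) : ℝ)) * t ω by ring]
            exact le_add_of_nonneg_left (le_of_lt (Real.exp_pos _))

lemma cond_zero {P : Measure Ω} [IsProbabilityMeasure P]
    {Xf : Ω → Fin d → ℝ} (hXm : Measurable Xf) {Wf : Ω → Fin 2} (hWm : Measurable Wf)
    (η : Fin d → ℝ)
    (hprop : (P[(fun ω => if Wf ω = 1 then (1:ℝ) else 0) |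
        MeasurableSpace.comap Xf inferInstance])
        =ᵐ[P] fun ω => logistic (∑ l, η l * Xf ω l))
    {f : (Fin d → ℝ) → ℝ} (hf : Measurable f) (hfi : Integrable (fun ω => f (Xf ω)) P) :
    ∫ ω, f (Xf ω) * (logistic (∑ l, η l * Xf ω l) - (if Wf ω = 1 then (1:ℝ) else 0)) ∂P
      = 0 := by
  have hm : MeasurableSpace.comap Xf inferInstance ≤ ‹MeasurableSpace Ω› := hXm.comap_le
  set gW : Ω → ℝ := fun ω => if Wf ω = 1 then (1:ℝ) else 0 with hgWdef
  have hgWm : Measurable gW := by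
    have : gW = (fun w : Fin 2 => if w = 1 then (1:ℝ) else 0) ∘ Wf := rfl
    rw [this]
    exact (measurable_of_countable _).comp hWm
  have hgW_bd : ∀ ω, |gW ω| ≤ 1 := by
    intro ω; rw [hgWdef]; dsimp only; split <;> simp
  have hgWi : Integrable gW P := by
    refine Integrable.mono' (integrable_const 1) hgWm.aestronglyMeasurable
      (ae_of_all _ fun ω => ?_)
    rw [Real.norm_eq_abs]; exact hgW_bd ω
  have hXmm : Measurable[MeasurableSpace.comap Xf inferInstance] Xf := fun s hs => ⟨s, hs, rfl⟩
  have hFm : StronglyMeasurable[MeasurableSpace.comap Xf inferInstance] (fun ω => f (Xf ω)) :=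
    (hf.comp hXmm).stronglyMeasurable
  have hfgi : Integrable (fun ω => f (Xf ω) * gW ω) P := by
    refine Integrable.mono' hfi.abs ((hf.comp hXm).mul hgWm).aestronglyMeasurable
      (ae_of_all _ fun ω => ?_)
    rw [Real.norm_eq_abs, abs_mul]
    calc |f (Xf ω)| * |gW ω| ≤ |f (Xf ω)| * 1 :=
          mul_le_mul_of_nonneg_left (hgW_bd ω) (abs_nonneg _)
      _ = |f (Xf ω)| := mul_one _
  have hfπi : Integrable (fun ω => f (Xf ω) * logistic (∑ l, η l * Xf ω l)) P := by
    have hπm : Measurable (fun ω => logistic (∑ l, η l * Xf ω l)) :=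
      measurable_logistic.comp (Finset.measurable_sum _ fun l _ =>
        (measurable_const.mul hXm.eval))
    refine Integrable.mono' hfi.abs ((hf.comp hXm).mul hπm).aestronglyMeasurable
      (ae_of_all _ fun ω => ?_)
    rw [Real.norm_eq_abs, abs_mul]
    have h1 := logistic_pos (∑ l, η l * Xf ω l)
    have h2 := logistic_lt_one (∑ l, η l * Xf ω l)
    calc |f (Xf ω)| * |logistic (∑ l, η l * Xf ω l)| ≤ |f (Xf ω)| * 1 := by
          refine mul_le_mul_of_nonneg_left ?_ (abs_nonneg _)
          rw [abs_of_pos h1]; linarith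
      _ = |f (Xf ω)| := mul_one _
  have key : ∫ ω, f (Xf ω) * gW ω ∂P
      = ∫ ω, f (Xf ω) * logistic (∑ l, η l * Xf ω l) ∂P := by
    calc ∫ ω, f (Xf ω) * gW ω ∂P
        = ∫ ω, (P[fun ω => f (Xf ω) * gW ω|MeasurableSpace.comap Xf inferInstance]) ω ∂P :=
          (integral_condExp hm (f := fun ω => f (Xf ω) * gW ω)).symm
      _ = ∫ ω, (fun ω => f (Xf ω)) ω * (P[gW|MeasurableSpace.comap Xf inferInstance]) ω ∂P := by
          refine integral_congr_ae ?_
          filter_upwards [condExp_mul_of_stronglyMeasurable_left hFm hfgi hgWi] with ω h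
          exact h
      _ = ∫ ω, f (Xf ω) * logistic (∑ l, η l * Xf ω l) ∂P := by
          refine integral_congr_ae ?_
          filter_upwards [hprop] with ω h
          rw [h]
  have hsub : (fun ω => f (Xf ω) * (logistic (∑ l, η l * Xf ω l) - gW ω))
      = fun ω => f (Xf ω) * logistic (∑ l, η l * Xf ω l) - f (Xf ω) * gW ω := by
    funext ω; ring
  rw [hsub, integral_sub hfπi hfgi, key, sub_self]

end Aux3
set_option maxHeartbeats 1600000 in
/-- in the logistic-selection Gaussian linear model with mean-zero
covariates and known propensity `π(x) = σ(ηᵀx)`, the vectors `Z¹ i, Z⁰ i` have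
mean zero and finite second moments; and for random vectors `A 0, A 1`
independent of the data, square integrable, with means `β 0, β 1`, covariances
`V 0, V 1` and vanishing cross-covariance, the remainder `R` satisfies
(i) `E[R] = 0`; (ii) `Var(√n R) = trace(V 1 Σ_{Z¹}) + trace(V 0 Σ_{Z⁰})`;
(iii) `E[R θ̂_or] = 0`, i.e. `R` and the oracle AIPW estimator are uncorrelated. -/
theorem stmt11 (P : Measure Ω) (n d : ℕ) (hn : 0 < n)
    (S : Matrix (Fin d) (Fin d) ℝ) (η : Fin d → ℝ) (β : Fin 2 → Fin d → ℝ)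
    (σ2 : ℝ) (X : Fin n → Ω → Fin d → ℝ) (W : Fin n → Ω → Fin 2)
    (ε : Fin n → Ω → ℝ) (Y : Fin n → Ω → ℝ)
    (model : LogisticSelectionModel P n d S 0 η β σ2 X W ε Y)
    (A : Fin 2 → Ω → Fin d → ℝ) (hAmeas : ∀ w, Measurable (A w))
    (hAL2 : ∀ w j, MemLp (fun ω => A w ω j) 2 P)
    -- `(A 0, A 1)` is independent of the data `{(X i, W i, ε i)}`:
    (hAindep : IndepFun (fun ω => (A 0 ω, A 1 ω))
      (fun ω (i : Fin n) => (X i ω, W i ω, ε i ω)) P)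
    (hAmean : ∀ w j, ∫ ω, A w ω j ∂P = β w j)
    (V : Fin 2 → Matrix (Fin d) (Fin d) ℝ)
    (hV : ∀ w j k, V w j k = ∫ ω, A w ω j * A w ω k ∂P - β w j * β w k)
    (hAcross : ∀ j k, ∫ ω, A 1 ω j * A 0 ω k ∂P = β 1 j * β 0 k) :
    (∀ (w : Fin 2) (i : Fin n) (j : Fin d),
      MemLp (fun ω => Zvec η X W w i ω j) 2 P ∧
      ∫ ω, Zvec η X W w i ω j ∂P = 0) ∧
    (∫ ω, Rrem η X W A β ω ∂P = 0) ∧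
    ((∫ ω, (Real.sqrt n * Rrem η X W A β ω) ^ 2 ∂P)
        - (∫ ω, Real.sqrt n * Rrem η X W A β ω ∂P) ^ 2
      = (V 1 * Matrix.of (fun j k =>
            ∫ ω, Zvec η X W 1 ⟨0, hn⟩ ω j * Zvec η X W 1 ⟨0, hn⟩ ω k ∂P)).trace
        + (V 0 * Matrix.of (fun j k =>
            ∫ ω, Zvec η X W 0 ⟨0, hn⟩ ω j * Zvec η X W 0 ⟨0, hn⟩ ω k ∂P)).trace) ∧
    (∫ ω, Rrem η X W A β ω * aipwOracle η X W Y β ω ∂P = 0) := by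
  haveI hPP : IsProbabilityMeasure P := model.prob
  -- measurability of triples
  have htripm : ∀ i : Fin n, Measurable (fun ω => (X i ω, W i ω, ε i ω)) := fun i =>
    (model.measX i).prodMk ((model.measW i).prodMk (model.measEps i))
  have hgauss : ∀ i : Fin n, ∀ a : Fin d → ℝ,
      ∃ μ v, Measure.map (fun ω => ∑ l, a l * X i ω l) P = gaussianReal μ v :=
    fun i a => ⟨_, _, model.gauss i a⟩
  have hMint : ∀ (i : Fin n) (p q r : ℕ) (j k : Fin d),
      Integrable (fun ω => Gfun η (X i ω) ^ p * |X i ω j| ^ q * |X i ω k| ^ r) P :=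
    fun i p q r j k => master_int (model.measX i) η (hgauss i) p q r j k
  have hZeq : ∀ (w : Fin 2) (i : Fin n) (j : Fin d) (ω : Ω),
      Zvec η X W w i ω j = zf η w j (X i ω, W i ω, ε i ω) := fun w i j ω => rfl
  have hZm : ∀ (w : Fin 2) (i : Fin n) (j : Fin d),
      Measurable (fun ω => Zvec η X W w i ω j) := by
    intro w i j
    simp only [hZeq]
    exact (measurable_zf η w j).comp (htripm i)
  have hZbd : ∀ (w : Fin 2) (i : Fin n) (j : Fin d) (ω : Ω),
      |Zvec η X W w i ω j| ≤ Gfun η (X i ω) * |X i ω j| := by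
    intro w i j ω
    rw [hZeq]
    exact abs_zf_le η w j (X i ω, W i ω, ε i ω)
  have hZint : ∀ (w : Fin 2) (i : Fin n) (j : Fin d),
      Integrable (fun ω => Zvec η X W w i ω j) P := by
    intro w i j
    refine Integrable.mono' (hMint i 1 1 0 j j) (hZm w i j).aestronglyMeasurable
      (ae_of_all _ fun ω => ?_)
    simp only [pow_one, pow_zero, mul_one]
    rw [Real.norm_eq_abs]
    exact hZbd w i j ω
  have hZZint : ∀ (w w' : Fin 2) (i : Fin n) (j k : Fin d),
      Integrable (fun ω => Zvec η X W w i ω j * Zvec η X W w' i ω k) P := by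
    intro w w' i j k
    refine Integrable.mono' (hMint i 2 1 1 j k)
      ((hZm w i j).mul (hZm w' i k)).aestronglyMeasurable (ae_of_all _ fun ω => ?_)
    rw [Real.norm_eq_abs, abs_mul]
    calc |Zvec η X W w i ω j| * |Zvec η X W w' i ω k|
        ≤ (Gfun η (X i ω) * |X i ω j|) * (Gfun η (X i ω) * |X i ω k|) :=
          mul_le_mul (hZbd w i j ω) (hZbd w' i k ω) (abs_nonneg _)
            (mul_nonneg (Gfun_pos η (X i ω)).le (abs_nonneg _))
      _ = Gfun η (X i ω) ^ 2 * |X i ω j| ^ 1 * |X i ω k| ^ 1 := by ring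
  have hZL2 : ∀ (w : Fin 2) (i : Fin n) (j : Fin d),
      MemLp (fun ω => Zvec η X W w i ω j) 2 P := by
    intro w i j
    refine (memLp_two_iff_integrable_sq (hZm w i j).aestronglyMeasurable).2 ?_
    have := hZZint w w i j j
    refine this.congr (ae_of_all _ fun ω => ?_)
    ring
  have hvalR : ∀ v : Fin 2, ((v.val : ℕ) : ℝ) = if v = 1 then (1:ℝ) else 0 := by
    intro v; fin_cases v <;> simp
  have hZmean : ∀ (w : Fin 2) (i : Fin n) (j : Fin d),
      ∫ ω, Zvec η X W w i ω j ∂P = 0 := by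
    intro w i j
    have hfm : Measurable (fun x : Fin d → ℝ => x j /
        (if w = 1 then logistic (∑ l, η l * x l) else 1 - logistic (∑ l, η l * x l))) := by
      refine (measurable_pi_apply j).div ?_
      split
      · exact measurable_logistic.comp (Finset.measurable_sum _ fun l _ =>
          measurable_const.mul (measurable_pi_apply l))
      · exact measurable_const.sub (measurable_logistic.comp (Finset.measurable_sum _ fun l _ =>
          measurable_const.mul (measurable_pi_apply l)))
    have hfi : Integrable (fun ω => (X i ω) j /
        (if w = 1 then logistic (∑ l, η l * X i ω l)
          else 1 - logistic (∑ l, η l * X i ω l))) P := by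
      refine Integrable.mono' (hMint i 1 1 0 j j)
        (hfm.comp (model.measX i)).aestronglyMeasurable (ae_of_all _ fun ω => ?_)
      simp only [pow_one, pow_zero, mul_one]
      rw [Real.norm_eq_abs, abs_div, abs_of_pos (denom_pos η w (X i ω, W i ω, ε i ω)),
        div_le_iff₀ (denom_pos η w (X i ω, W i ω, ε i ω))]
      calc |X i ω j| = 1 * |X i ω j| := (one_mul _).symm
        _ ≤ (Gfun η (X i ω) * (if w = 1 then logistic (∑ l, η l * X i ω l)
              else 1 - logistic (∑ l, η l * X i ω l))) * |X i ω j| := by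
            refine mul_le_mul_of_nonneg_right ?_ (abs_nonneg _)
            have h := mul_le_mul_of_nonneg_right (inv_denom_le η w (X i ω, W i ω, ε i ω))
              (le_of_lt (denom_pos η w (X i ω, W i ω, ε i ω)))
            rwa [inv_mul_cancel₀ (ne_of_gt (denom_pos η w (X i ω, W i ω, ε i ω)))] at h
        _ = Gfun η (X i ω) * |X i ω j| * (if w = 1 then logistic (∑ l, η l * X i ω l)
              else 1 - logistic (∑ l, η l * X i ω l)) := by ring
    have heq : (fun ω => Zvec η X W w i ω j) = fun ω =>
        ((X i ω) j / (if w = 1 then logistic (∑ l, η l * X i ω l)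
          else 1 - logistic (∑ l, η l * X i ω l)))
          * (logistic (∑ l, η l * X i ω l) - (if W i ω = 1 then (1:ℝ) else 0)) := by
      funext ω
      rw [hZeq]
      unfold zf
      dsimp only
      rw [hvalR (W i ω)]
      ring
    rw [heq]
    exact cond_zero (model.measX i) (model.measW i) η (model.propScore i) hfm hfi
    -- pairwise independence of the data triples
  have hpair : ∀ (i i' : Fin n), i ≠ i' → ∀ (φ ψ : (Fin d → ℝ) × Fin 2 × ℝ → ℝ),
      Measurable φ → Measurable ψ →
      IndepFun (fun ω => φ (X i ω, W i ω, ε i ω)) (fun ω => ψ (X i' ω, W i' ω, ε i' ω)) P :=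
    fun i i' h φ ψ hφ hψ => (model.indep.indepFun h).comp hφ hψ
  -- selecting a coordinate of the pair (A 0, A 1)
  have hselm : ∀ (w : Fin 2) (j : Fin d), Measurable (fun pr : (Fin d → ℝ) × (Fin d → ℝ) =>
      (if w = 0 then pr.1 else pr.2) j - β w j) := by
    intro w j
    by_cases h : w = 0 <;> simp only [h, if_true, if_false] <;>
      first
      | exact (measurable_fst.eval (a := j)).sub measurable_const
      | exact (measurable_snd.eval (a := j)).sub measurable_const
  have hAsel : ∀ (w : Fin 2) (j : Fin d),
      (fun ω => A w ω j - β w j) = (fun ω => (fun pr : (Fin d → ℝ) × (Fin d → ℝ) =>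
        (if w = 0 then pr.1 else pr.2) j - β w j) (A 0 ω, A 1 ω)) := by
    intro w j; funext ω; fin_cases w <;> simp
  have hawL2 : ∀ (w : Fin 2) (j : Fin d), MemLp (fun ω => A w ω j - β w j) 2 P :=
    fun w j => (hAL2 w j).sub (memLp_const _)
  have hawint : ∀ (w : Fin 2) (j : Fin d), Integrable (fun ω => A w ω j - β w j) P :=
    fun w j => (hawL2 w j).integrable one_le_two
  have hAint : ∀ (w : Fin 2) (j : Fin d), Integrable (fun ω => A w ω j) P :=
    fun w j => (hAL2 w j).integrable one_le_two
  have hawmean : ∀ (w : Fin 2) (j : Fin d), ∫ ω, (A w ω j - β w j) ∂P = 0 := by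
    intro w j
    rw [integral_sub (hAint w j) (integrable_const _)]
    simp [hAmean w j]
  -- independence of aw and data functions
  have hawData : ∀ (w : Fin 2) (j : Fin d) (v : (Fin n → (Fin d → ℝ) × Fin 2 × ℝ) → ℝ),
      Measurable v → IndepFun (fun ω => A w ω j - β w j)
        (fun ω => v (fun i => (X i ω, W i ω, ε i ω))) P := by
    intro w j v hv
    rw [hAsel w j]
    exact hAindep.comp (hselm w j) hv
  have hAAData : ∀ (w w' : Fin 2) (j k : Fin d) (v : (Fin n → (Fin d → ℝ) × Fin 2 × ℝ) → ℝ),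
      Measurable v → IndepFun (fun ω => (A w ω j - β w j) * (A w' ω k - β w' k))
        (fun ω => v (fun i => (X i ω, W i ω, ε i ω))) P := by
    intro w w' j k v hv
    have heq : (fun ω => (A w ω j - β w j) * (A w' ω k - β w' k))
        = (fun ω => (fun pr : (Fin d → ℝ) × (Fin d → ℝ) =>
            ((if w = 0 then pr.1 else pr.2) j - β w j)
            * ((if w' = 0 then pr.1 else pr.2) k - β w' k)) (A 0 ω, A 1 ω)) := by
      funext ω; fin_cases w <;> fin_cases w' <;> simp
    rw [heq]
    exact hAindep.comp ((hselm w j).mul (hselm w' k)) hv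
  -- sums of Z
  have hSm : ∀ (w : Fin 2) (j : Fin d), Measurable (fun ω => ∑ i, Zvec η X W w i ω j) :=
    fun w j => Finset.measurable_sum _ fun i _ => hZm w i j
  have hSint : ∀ (w : Fin 2) (j : Fin d), Integrable (fun ω => ∑ i, Zvec η X W w i ω j) P :=
    fun w j => integrable_finset_sum _ fun i _ => hZint w i j
  have hSmean : ∀ (w : Fin 2) (j : Fin d), ∫ ω, (∑ i, Zvec η X W w i ω j) ∂P = 0 := by
    intro w j
    rw [integral_finset_sum _ fun i _ => hZint w i j]
    exact Finset.sum_eq_zero fun i _ => hZmean w i j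
  have hawSindep : ∀ (w : Fin 2) (j : Fin d), IndepFun (fun ω => A w ω j - β w j)
      (fun ω => ∑ i, Zvec η X W w i ω j) P := by
    intro w j
    have h := hawData w j (fun dv => ∑ i, zf η w j (dv i))
      (Finset.measurable_sum _ fun i _ => (measurable_zf η w j).comp (measurable_pi_apply i))
    simp only [← hZeq] at h
    exact h
  -- representation of R
  have hRrep : ∀ ω, Rrem η X W A β ω = (n:ℝ)⁻¹ *
      ∑ w : Fin 2, ∑ j, (A w ω j - β w j) * (∑ i, Zvec η X W w i ω j) := by
    intro ω
    unfold Rrem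
    rw [Fin.sum_univ_two, Finset.sum_add_distrib]
    congr 1
    rw [add_comm]
    congr 1 <;>
      (rw [Finset.sum_comm]; refine Finset.sum_congr rfl fun j _ => ?_;
        rw [← Finset.mul_sum])
  have hawSint : ∀ (w : Fin 2) (j : Fin d),
      Integrable (fun ω => (A w ω j - β w j) * (∑ i, Zvec η X W w i ω j)) P := by
    intro w j
    exact (hawSindep w j).integrable_mul (hawint w j) (hSint w j)
  -- Part (i)
  have partI : ∫ ω, Rrem η X W A β ω ∂P = 0 := by
    rw [integral_congr_ae (ae_of_all _ hRrep), integral_const_mul]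
    rw [integral_finset_sum _ (fun w _ => integrable_finset_sum _ fun j _ => hawSint w j)]
    have : ∀ w : Fin 2, ∫ ω, (∑ j, (A w ω j - β w j) * (∑ i, Zvec η X W w i ω j)) ∂P = 0 := by
      intro w
      rw [integral_finset_sum _ fun j _ => hawSint w j]
      refine Finset.sum_eq_zero fun j _ => ?_
      have h := (hawSindep w j).integral_fun_mul_eq_mul_integral (hawint w j).aestronglyMeasurable (hSint w j).aestronglyMeasurable
      have h2 : ∫ ω, (A w ω j - β w j) * (∑ i, Zvec η X W w i ω j) ∂P
          = (∫ ω, (A w ω j - β w j) ∂P) * ∫ ω, (∑ i, Zvec η X W w i ω j) ∂P := h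
      rw [h2, hawmean w j, zero_mul]
    rw [Finset.sum_congr rfl fun w _ => this w]
    simp
    -- Part (iii) machinery
  have hXint : ∀ (i : Fin n) (k : Fin d), Integrable (fun ω => X i ω k) P := by
    intro i k
    refine Integrable.mono' (hMint i 0 1 0 k k)
      ((model.measX i).eval (a := k)).aestronglyMeasurable (ae_of_all _ fun ω => ?_)
    simp only [pow_zero, pow_one, one_mul, mul_one]
    rw [Real.norm_eq_abs]
  have hεint : ∀ i : Fin n, Integrable (ε i) P := fun i => (model.epsL2 i).integrable one_le_two
  have hθpt : ∀ ω, aipwOracle η X W Y β ω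
      = (n:ℝ)⁻¹ * ∑ i, Dfun η β (X i ω, W i ω, ε i ω) := by
    intro ω
    unfold aipwOracle Dfun hwf
    congr 1
    refine Finset.sum_congr rfl fun i _ => ?_
    dsimp only
    rw [model.Ydef i ω]
    ring
  have hhwε_indep : ∀ i : Fin n,
      IndepFun (fun ω => hwf η (X i ω, W i ω, ε i ω)) (ε i) P := by
    intro i
    have hpm : Measurable (fun pr : (Fin d → ℝ) × Fin 2 => (pr.1, pr.2, (0:ℝ))) :=
      measurable_fst.prodMk (measurable_snd.prodMk measurable_const)
    have h := (model.indepEps i).comp (φ := fun pr : (Fin d → ℝ) × Fin 2 =>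
      hwf η (pr.1, pr.2, (0:ℝ))) (ψ := id) ((measurable_hwf η).comp hpm) measurable_id
    have heq : (fun ω => hwf η (X i ω, W i ω, ε i ω))
        = fun ω => hwf η (X i ω, W i ω, (0:ℝ)) := rfl
    rw [heq]
    exact h
  have hhwint : ∀ i : Fin n, Integrable (fun ω => hwf η (X i ω, W i ω, ε i ω)) P := by
    intro i
    refine Integrable.mono' (master_int_G (model.measX i) η (hgauss i) 2)
      ((measurable_hwf η).comp (htripm i)).aestronglyMeasurable (ae_of_all _ fun ω => ?_)
    rw [Real.norm_eq_abs]
    exact abs_hwf_le η _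
  have hDint : ∀ i : Fin n, Integrable (fun ω => Dfun η β (X i ω, W i ω, ε i ω)) P := by
    intro i
    have h1 : Integrable (fun ω => ∑ k, (β 1 k - β 0 k) * X i ω k) P :=
      integrable_finset_sum _ fun k _ => (hXint i k).const_mul _
    have h2 : Integrable (fun ω => hwf η (X i ω, W i ω, ε i ω) * ε i ω) P :=
      (hhwε_indep i).integrable_mul (hhwint i) (hεint i)
    have heq : (fun ω => Dfun η β (X i ω, W i ω, ε i ω))
        = fun ω => (∑ k, (β 1 k - β 0 k) * X i ω k)
            + hwf η (X i ω, W i ω, ε i ω) * ε i ω := rfl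
    rw [heq]
    exact h1.add h2
  have hZhwint : ∀ (w : Fin 2) (i : Fin n) (j : Fin d),
      Integrable (fun ω => Zvec η X W w i ω j * (hwf η (X i ω, W i ω, ε i ω) * ε i ω)) P := by
    intro w i j
    have hpm : Measurable (fun pr : (Fin d → ℝ) × Fin 2 => (pr.1, pr.2, (0:ℝ))) :=
      measurable_fst.prodMk (measurable_snd.prodMk measurable_const)
    have hind : IndepFun (fun ω => Zvec η X W w i ω j * hwf η (X i ω, W i ω, ε i ω))
        (ε i) P := by
      have h := (model.indepEps i).comp (φ := fun pr : (Fin d → ℝ) × Fin 2 =>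
          zf η w j (pr.1, pr.2, (0:ℝ)) * hwf η (pr.1, pr.2, (0:ℝ))) (ψ := id)
        (((measurable_zf η w j).comp hpm).mul ((measurable_hwf η).comp hpm)) measurable_id
      have heq : (fun ω => Zvec η X W w i ω j * hwf η (X i ω, W i ω, ε i ω))
          = fun ω => zf η w j (X i ω, W i ω, (0:ℝ)) * hwf η (X i ω, W i ω, (0:ℝ)) := rfl
      rw [heq]
      exact h
    have hZhw : Integrable (fun ω => Zvec η X W w i ω j * hwf η (X i ω, W i ω, ε i ω)) P := by
      refine Integrable.mono' (hMint i 3 1 0 j j)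
        ((hZm w i j).mul ((measurable_hwf η).comp (htripm i))).aestronglyMeasurable
        (ae_of_all _ fun ω => ?_)
      rw [Real.norm_eq_abs, abs_mul]
      have hb1 := hZbd w i j ω
      have hb2 := abs_hwf_le η (X i ω, W i ω, ε i ω)
      have hG := Gfun_pos η (X i ω)
      calc |Zvec η X W w i ω j| * |hwf η (X i ω, W i ω, ε i ω)|
          ≤ (Gfun η (X i ω) * |X i ω j|) * Gfun η (X i ω) ^ 2 :=
            mul_le_mul hb1 hb2 (abs_nonneg _) (mul_nonneg hG.le (abs_nonneg _))
        _ = Gfun η (X i ω) ^ 3 * |X i ω j| ^ 1 * |X i ω j| ^ 0 := by ring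
    have h := hind.integrable_mul hZhw (hεint i)
    refine h.congr (ae_of_all _ fun ω => ?_)
    show Zvec η X W w i ω j * hwf η (X i ω, W i ω, ε i ω) * ε i ω = _
    ring
  have hZDint : ∀ (w : Fin 2) (j : Fin d) (i i' : Fin n),
      Integrable (fun ω => Zvec η X W w i ω j * Dfun η β (X i' ω, W i' ω, ε i' ω)) P := by
    intro w j i i'
    by_cases h : i = i'
    · subst h
      have heq : (fun ω => Zvec η X W w i ω j * Dfun η β (X i ω, W i ω, ε i ω))
          = fun ω => (∑ k, (β 1 k - β 0 k) * (Zvec η X W w i ω j * X i ω k))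
            + Zvec η X W w i ω j * (hwf η (X i ω, W i ω, ε i ω) * ε i ω) := by
        funext ω
        show Zvec η X W w i ω j * ((∑ k, (β 1 k - β 0 k) * X i ω k)
            + hwf η (X i ω, W i ω, ε i ω) * ε i ω) = _
        rw [mul_add, Finset.mul_sum]
        congr 1
        exact Finset.sum_congr rfl fun k _ => by ring
      rw [heq]
      refine Integrable.add (integrable_finset_sum _ fun k _ => ?_) (hZhwint w i j)
      refine Integrable.const_mul ?_ _
      refine Integrable.mono' (hMint i 1 1 1 j k)
        ((hZm w i j).mul ((model.measX i).eval (a := k))).aestronglyMeasurable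
        (ae_of_all _ fun ω => ?_)
      rw [Real.norm_eq_abs, abs_mul]
      calc |Zvec η X W w i ω j| * |X i ω k|
          ≤ (Gfun η (X i ω) * |X i ω j|) * |X i ω k| :=
            mul_le_mul_of_nonneg_right (hZbd w i j ω) (abs_nonneg _)
        _ = Gfun η (X i ω) ^ 1 * |X i ω j| ^ 1 * |X i ω k| ^ 1 := by ring
    · have hp := hpair i i' h (fun p => zf η w j p) (fun p => Dfun η β p)
        (measurable_zf η w j) (measurable_Dfun η β)
      simp only [← hZeq] at hp
      exact hp.integrable_mul (hZint w i j) (hDint i')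
  have hSθint : ∀ (w : Fin 2) (j : Fin d),
      Integrable (fun ω => (∑ i, Zvec η X W w i ω j) * aipwOracle η X W Y β ω) P := by
    intro w j
    have heq : (fun ω => (∑ i, Zvec η X W w i ω j) * aipwOracle η X W Y β ω)
        = fun ω => (n:ℝ)⁻¹ * ∑ i, ∑ i',
            Zvec η X W w i ω j * Dfun η β (X i' ω, W i' ω, ε i' ω) := by
      funext ω
      rw [hθpt ω]
      calc (∑ i, Zvec η X W w i ω j)
            * ((n:ℝ)⁻¹ * ∑ i, Dfun η β (X i ω, W i ω, ε i ω))
          = (n:ℝ)⁻¹ * ((∑ i, Zvec η X W w i ω j)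
              * (∑ i, Dfun η β (X i ω, W i ω, ε i ω))) := by ring
        _ = (n:ℝ)⁻¹ * ∑ i, ∑ i',
              Zvec η X W w i ω j * Dfun η β (X i' ω, W i' ω, ε i' ω) := by
            rw [Finset.sum_mul_sum]
    rw [heq]
    exact (integrable_finset_sum _ fun i _ =>
      integrable_finset_sum _ fun i' _ => hZDint w j i i').const_mul _
  have partIII : ∫ ω, Rrem η X W A β ω * aipwOracle η X W Y β ω ∂P = 0 := by
    have hrep : (fun ω => Rrem η X W A β ω * aipwOracle η X W Y β ω)
        = fun ω => (n:ℝ)⁻¹ * ∑ w : Fin 2, ∑ j, (A w ω j - β w j) *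
            ((∑ i, Zvec η X W w i ω j) * aipwOracle η X W Y β ω) := by
      funext ω
      rw [hRrep ω, mul_assoc, Finset.sum_mul]
      congr 1
      refine Finset.sum_congr rfl fun w _ => ?_
      rw [Finset.sum_mul]
      exact Finset.sum_congr rfl fun j _ => by ring
    have hindSθ : ∀ (w : Fin 2) (j : Fin d), IndepFun (fun ω => A w ω j - β w j)
        (fun ω => (∑ i, Zvec η X W w i ω j) * aipwOracle η X W Y β ω) P := by
      intro w j
      have hv : Measurable (fun dv : Fin n → (Fin d → ℝ) × Fin 2 × ℝ =>
          (∑ i, zf η w j (dv i)) * ((n:ℝ)⁻¹ * ∑ i, Dfun η β (dv i))) :=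
        (Finset.measurable_sum _ fun i _ =>
          (measurable_zf η w j).comp (measurable_pi_apply i)).mul
          ((Finset.measurable_sum _ fun i _ =>
            (measurable_Dfun η β).comp (measurable_pi_apply i)).const_mul _)
      have hind := hawData w j _ hv
      simp only [← hZeq, ← hθpt] at hind
      exact hind
    have hawSθint : ∀ (w : Fin 2) (j : Fin d), Integrable (fun ω => (A w ω j - β w j) *
        ((∑ i, Zvec η X W w i ω j) * aipwOracle η X W Y β ω)) P := fun w j =>
      (hindSθ w j).integrable_mul (hawint w j) (hSθint w j)
    rw [hrep, integral_const_mul,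
      integral_finset_sum _ (fun w _ => integrable_finset_sum _ fun j _ => hawSθint w j)]
    have hz : ∀ w : Fin 2, ∫ ω, (∑ j, (A w ω j - β w j) *
        ((∑ i, Zvec η X W w i ω j) * aipwOracle η X W Y β ω)) ∂P = 0 := by
      intro w
      rw [integral_finset_sum _ fun j _ => hawSθint w j]
      refine Finset.sum_eq_zero fun j _ => ?_
      have h : ∫ ω, (A w ω j - β w j) *
          ((∑ i, Zvec η X W w i ω j) * aipwOracle η X W Y β ω) ∂P
          = (∫ ω, (A w ω j - β w j) ∂P) *
            ∫ ω, (∑ i, Zvec η X W w i ω j) * aipwOracle η X W Y β ω ∂P :=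
        (hindSθ w j).integral_fun_mul_eq_mul_integral (hawint w j).aestronglyMeasurable (hSθint w j).aestronglyMeasurable
      rw [h, hawmean w j, zero_mul]
    rw [Finset.sum_congr rfl fun w _ => hz w]
    simp
    -- Part (ii) machinery
  have hident : ∀ (i : Fin n) (φ : (Fin d → ℝ) × Fin 2 × ℝ → ℝ), Measurable φ →
      ∫ ω, φ (X i ω, W i ω, ε i ω) ∂P
        = ∫ ω, φ (X ⟨0,hn⟩ ω, W ⟨0,hn⟩ ω, ε ⟨0,hn⟩ ω) ∂P := by
    intro i φ hφ
    rw [← integral_map (htripm i).aemeasurable hφ.aestronglyMeasurable, model.ident i ⟨0,hn⟩,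
      integral_map (htripm ⟨0,hn⟩).aemeasurable hφ.aestronglyMeasurable]
  set Cw : Fin 2 → Fin 2 → Fin d → Fin d → ℝ := fun w w' j k =>
    ∫ ω, Zvec η X W w ⟨0,hn⟩ ω j * Zvec η X W w' ⟨0,hn⟩ ω k ∂P with hCw
  have hZZident : ∀ (w w' : Fin 2) (j k : Fin d) (i : Fin n),
      ∫ ω, Zvec η X W w i ω j * Zvec η X W w' i ω k ∂P = Cw w w' j k := by
    intro w w' j k i
    have h := hident i (fun p => zf η w j p * zf η w' k p)
      ((measurable_zf η w j).mul (measurable_zf η w' k))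
    simp only [← hZeq] at h
    exact h
  have hZZzero : ∀ (w w' : Fin 2) (j k : Fin d) (i i' : Fin n), i ≠ i' →
      ∫ ω, Zvec η X W w i ω j * Zvec η X W w' i' ω k ∂P = 0 := by
    intro w w' j k i i' h
    have hp := hpair i i' h (zf η w j) (zf η w' k)
      (measurable_zf η w j) (measurable_zf η w' k)
    simp only [← hZeq] at hp
    have h2 : ∫ ω, Zvec η X W w i ω j * Zvec η X W w' i' ω k ∂P
        = (∫ ω, Zvec η X W w i ω j ∂P) * ∫ ω, Zvec η X W w' i' ω k ∂P :=
      hp.integral_fun_mul_eq_mul_integral (hZint w i j).aestronglyMeasurable (hZint w' i' k).aestronglyMeasurable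
    rw [h2, hZmean, zero_mul]
  have hZZint' : ∀ (w w' : Fin 2) (j k : Fin d) (i i' : Fin n),
      Integrable (fun ω => Zvec η X W w i ω j * Zvec η X W w' i' ω k) P := by
    intro w w' j k i i'
    by_cases h : i = i'
    · subst h; exact hZZint w w' i j k
    · have hp := hpair i i' h (zf η w j) (zf η w' k)
        (measurable_zf η w j) (measurable_zf η w' k)
      simp only [← hZeq] at hp
      exact hp.integrable_mul (hZint w i j) (hZint w' i' k)
  have hSSint : ∀ (w w' : Fin 2) (j k : Fin d),
      Integrable (fun ω => (∑ i, Zvec η X W w i ω j) * (∑ i, Zvec η X W w' i ω k)) P := by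
    intro w w' j k
    have heq : (fun ω => (∑ i, Zvec η X W w i ω j) * (∑ i, Zvec η X W w' i ω k))
        = fun ω => ∑ i, ∑ i', Zvec η X W w i ω j * Zvec η X W w' i' ω k := by
      funext ω; rw [Finset.sum_mul_sum]
    rw [heq]
    exact integrable_finset_sum _ fun i _ => integrable_finset_sum _ fun i' _ =>
      hZZint' w w' j k i i'
  have hSS : ∀ (w w' : Fin 2) (j k : Fin d),
      ∫ ω, (∑ i, Zvec η X W w i ω j) * (∑ i, Zvec η X W w' i ω k) ∂P
        = n * Cw w w' j k := by
    intro w w' j k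
    have heq : ∀ ω, (∑ i, Zvec η X W w i ω j) * (∑ i, Zvec η X W w' i ω k)
        = ∑ i, ∑ i', Zvec η X W w i ω j * Zvec η X W w' i' ω k := by
      intro ω; rw [Finset.sum_mul_sum]
    rw [integral_congr_ae (ae_of_all _ heq),
      integral_finset_sum _ (fun i _ => integrable_finset_sum _ fun i' _ =>
        hZZint' w w' j k i i')]
    have hterm : ∀ i : Fin n, ∫ ω, (∑ i', Zvec η X W w i ω j * Zvec η X W w' i' ω k) ∂P
        = Cw w w' j k := by
      intro i
      rw [integral_finset_sum _ fun i' _ => hZZint' w w' j k i i']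
      have : ∀ i' : Fin n, ∫ ω, Zvec η X W w i ω j * Zvec η X W w' i' ω k ∂P
          = if i' = i then Cw w w' j k else 0 := by
        intro i'
        by_cases h : i' = i
        · subst h; simp only [if_true]; exact hZZident w w' j k i'
        · rw [if_neg h]; exact hZZzero w w' j k i i' (fun hh => h hh.symm)
      rw [Finset.sum_congr rfl fun i' _ => this i']
      simp
    rw [Finset.sum_congr rfl fun i _ => hterm i]
    simp [Finset.sum_const, Finset.card_univ, nsmul_eq_mul]
  -- covariances of the A-side
  have hMgen : ∀ (w w' : Fin 2) (j k : Fin d),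
      ∫ ω, (A w ω j - β w j) * (A w' ω k - β w' k) ∂P
        = (∫ ω, A w ω j * A w' ω k ∂P) - β w j * β w' k := by
    intro w w' j k
    have hAA : Integrable (fun ω => A w ω j * A w' ω k) P := L2mul (hAL2 w j) (hAL2 w' k)
    have heq : ∀ ω, (A w ω j - β w j) * (A w' ω k - β w' k)
        = (A w ω j * A w' ω k - β w j * A w' ω k)
          - (β w' k * A w ω j - β w j * β w' k) := by intro ω; ring
    have hc1 : Integrable (fun ω => β w j * A w' ω k) P := (hAint w' k).const_mul _
    have hc2 : Integrable (fun ω => β w' k * A w ω j) P := (hAint w j).const_mul _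
    have i1 : Integrable (fun ω => A w ω j * A w' ω k - β w j * A w' ω k) P := hAA.sub hc1
    have i2 : Integrable (fun ω => β w' k * A w ω j - β w j * β w' k) P :=
      hc2.sub (integrable_const _)
    rw [integral_congr_ae (ae_of_all _ heq), integral_sub i1 i2, integral_sub hAA hc1,
      integral_sub hc2 (integrable_const _), integral_const_mul, integral_const_mul,
      hAmean, hAmean, integral_const]
    simp [measure_univ]
    ring
  have hMsame : ∀ (w : Fin 2) (j k : Fin d),
      ∫ ω, (A w ω j - β w j) * (A w ω k - β w k) ∂P = V w j k := by
    intro w j k; rw [hMgen, hV w j k]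
  have hMc10 : ∀ (j k : Fin d),
      ∫ ω, (A 1 ω j - β 1 j) * (A 0 ω k - β 0 k) ∂P = 0 := by
    intro j k; rw [hMgen, hAcross j k]; ring
  have hMc01 : ∀ (j k : Fin d),
      ∫ ω, (A 0 ω j - β 0 j) * (A 1 ω k - β 1 k) ∂P = 0 := by
    intro j k
    rw [hMgen, show (∫ ω, A 0 ω j * A 1 ω k ∂P) = ∫ ω, A 1 ω k * A 0 ω j ∂P from
      integral_congr_ae (ae_of_all _ fun ω => mul_comm _ _), hAcross k j]
    ring
  -- product integrability and factorization
  have hFFind : ∀ p q : Fin 2 × Fin d,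
      IndepFun (fun ω => (A p.1 ω p.2 - β p.1 p.2) * (A q.1 ω q.2 - β q.1 q.2))
        (fun ω => (∑ i, Zvec η X W p.1 i ω p.2) * (∑ i, Zvec η X W q.1 i ω q.2)) P := by
    intro p q
    have hv : Measurable (fun dv : Fin n → (Fin d → ℝ) × Fin 2 × ℝ =>
        (∑ i, zf η p.1 p.2 (dv i)) * (∑ i, zf η q.1 q.2 (dv i))) :=
      (Finset.measurable_sum _ fun i _ =>
        (measurable_zf η p.1 p.2).comp (measurable_pi_apply i)).mul
        (Finset.measurable_sum _ fun i _ =>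
          (measurable_zf η q.1 q.2).comp (measurable_pi_apply i))
    have hind := hAAData p.1 q.1 p.2 q.2 _ hv
    simp only [← hZeq] at hind
    exact hind
  have hFFint : ∀ p q : Fin 2 × Fin d,
      Integrable (fun ω => ((A p.1 ω p.2 - β p.1 p.2) * (∑ i, Zvec η X W p.1 i ω p.2))
        * ((A q.1 ω q.2 - β q.1 q.2) * (∑ i, Zvec η X W q.1 i ω q.2))) P := by
    intro p q
    have h := (hFFind p q).integrable_mul (L2mul (hawL2 p.1 p.2) (hawL2 q.1 q.2))
      (hSSint p.1 q.1 p.2 q.2)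
    refine h.congr (ae_of_all _ fun ω => ?_)
    show ((A p.1 ω p.2 - β p.1 p.2) * (A q.1 ω q.2 - β q.1 q.2))
        * ((∑ i, Zvec η X W p.1 i ω p.2) * (∑ i, Zvec η X W q.1 i ω q.2)) = _
    ring
  have hFFval : ∀ p q : Fin 2 × Fin d,
      ∫ ω, ((A p.1 ω p.2 - β p.1 p.2) * (∑ i, Zvec η X W p.1 i ω p.2))
        * ((A q.1 ω q.2 - β q.1 q.2) * (∑ i, Zvec η X W q.1 i ω q.2)) ∂P
      = (∫ ω, (A p.1 ω p.2 - β p.1 p.2) * (A q.1 ω q.2 - β q.1 q.2) ∂P)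
          * (n * Cw p.1 q.1 p.2 q.2) := by
    intro p q
    have heq : ∀ ω, ((A p.1 ω p.2 - β p.1 p.2) * (∑ i, Zvec η X W p.1 i ω p.2))
        * ((A q.1 ω q.2 - β q.1 q.2) * (∑ i, Zvec η X W q.1 i ω q.2))
        = ((A p.1 ω p.2 - β p.1 p.2) * (A q.1 ω q.2 - β q.1 q.2))
          * ((∑ i, Zvec η X W p.1 i ω p.2) * (∑ i, Zvec η X W q.1 i ω q.2)) := by
      intro ω; ring
    have h2 : ∫ ω, ((A p.1 ω p.2 - β p.1 p.2) * (A q.1 ω q.2 - β q.1 q.2))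
          * ((∑ i, Zvec η X W p.1 i ω p.2) * (∑ i, Zvec η X W q.1 i ω q.2)) ∂P
        = (∫ ω, (A p.1 ω p.2 - β p.1 p.2) * (A q.1 ω q.2 - β q.1 q.2) ∂P)
          * ∫ ω, (∑ i, Zvec η X W p.1 i ω p.2) * (∑ i, Zvec η X W q.1 i ω q.2) ∂P :=
      (hFFind p q).integral_fun_mul_eq_mul_integral (L2mul (hawL2 p.1 p.2) (hawL2 q.1 q.2)).aestronglyMeasurable
        (hSSint p.1 q.1 p.2 q.2).aestronglyMeasurable
    rw [integral_congr_ae (ae_of_all _ heq), h2, hSS p.1 q.1 p.2 q.2]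
  -- the variance identity
  have hnne : (n:ℝ) ≠ 0 := Nat.cast_ne_zero.mpr hn.ne'
  have partII : (∫ ω, (Real.sqrt n * Rrem η X W A β ω) ^ 2 ∂P)
      - (∫ ω, Real.sqrt n * Rrem η X W A β ω ∂P) ^ 2
      = (V 1 * Matrix.of (fun j k =>
            ∫ ω, Zvec η X W 1 ⟨0, hn⟩ ω j * Zvec η X W 1 ⟨0, hn⟩ ω k ∂P)).trace
        + (V 0 * Matrix.of (fun j k =>
            ∫ ω, Zvec η X W 0 ⟨0, hn⟩ ω j * Zvec η X W 0 ⟨0, hn⟩ ω k ∂P)).trace := by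
    have hmean0 : ∫ ω, Real.sqrt n * Rrem η X W A β ω ∂P = 0 := by
      rw [integral_const_mul, partI, mul_zero]
    rw [hmean0, zero_pow two_ne_zero, sub_zero]
    have hsq : ∀ ω, (Real.sqrt n * Rrem η X W A β ω) ^ 2
        = (n:ℝ)⁻¹ * ((∑ p : Fin 2 × Fin d,
            (A p.1 ω p.2 - β p.1 p.2) * (∑ i, Zvec η X W p.1 i ω p.2))
          * (∑ q : Fin 2 × Fin d,
            (A q.1 ω q.2 - β q.1 q.2) * (∑ i, Zvec η X W q.1 i ω q.2))) := by
      intro ω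
      rw [mul_pow, Real.sq_sqrt (Nat.cast_nonneg n), hRrep ω]
      rw [show (∑ w : Fin 2, ∑ j, (A w ω j - β w j) * (∑ i, Zvec η X W w i ω j))
          = ∑ p : Fin 2 × Fin d, (A p.1 ω p.2 - β p.1 p.2) * (∑ i, Zvec η X W p.1 i ω p.2)
          from (Fintype.sum_prod_type (f := fun p : Fin 2 × Fin d =>
            (A p.1 ω p.2 - β p.1 p.2) * (∑ i, Zvec η X W p.1 i ω p.2))).symm]
      field_simp
    rw [integral_congr_ae (ae_of_all _ hsq), integral_const_mul]
    have hsum : ∫ ω, ((∑ p : Fin 2 × Fin d,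
          (A p.1 ω p.2 - β p.1 p.2) * (∑ i, Zvec η X W p.1 i ω p.2))
        * (∑ q : Fin 2 × Fin d,
          (A q.1 ω q.2 - β q.1 q.2) * (∑ i, Zvec η X W q.1 i ω q.2))) ∂P
        = ∑ p : Fin 2 × Fin d, ∑ q : Fin 2 × Fin d,
          (∫ ω, (A p.1 ω p.2 - β p.1 p.2) * (A q.1 ω q.2 - β q.1 q.2) ∂P)
            * (n * Cw p.1 q.1 p.2 q.2) := by
      have heq : ∀ ω, ((∑ p : Fin 2 × Fin d,
            (A p.1 ω p.2 - β p.1 p.2) * (∑ i, Zvec η X W p.1 i ω p.2))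
          * (∑ q : Fin 2 × Fin d,
            (A q.1 ω q.2 - β q.1 q.2) * (∑ i, Zvec η X W q.1 i ω q.2)))
          = ∑ p : Fin 2 × Fin d, ∑ q : Fin 2 × Fin d,
            ((A p.1 ω p.2 - β p.1 p.2) * (∑ i, Zvec η X W p.1 i ω p.2))
            * ((A q.1 ω q.2 - β q.1 q.2) * (∑ i, Zvec η X W q.1 i ω q.2)) := by
        intro ω; rw [Finset.sum_mul_sum]
      rw [integral_congr_ae (ae_of_all _ heq),
        integral_finset_sum _ (fun p _ => integrable_finset_sum _ fun q _ => hFFint p q)]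
      refine Finset.sum_congr rfl fun p _ => ?_
      rw [integral_finset_sum _ fun q _ => hFFint p q]
      exact Finset.sum_congr rfl fun q _ => hFFval p q
    rw [hsum]
    have hpull : ∑ p : Fin 2 × Fin d, ∑ q : Fin 2 × Fin d,
        (∫ ω, (A p.1 ω p.2 - β p.1 p.2) * (A q.1 ω q.2 - β q.1 q.2) ∂P)
          * (n * Cw p.1 q.1 p.2 q.2)
        = (n:ℝ) * ∑ p : Fin 2 × Fin d, ∑ q : Fin 2 × Fin d,
          (∫ ω, (A p.1 ω p.2 - β p.1 p.2) * (A q.1 ω q.2 - β q.1 q.2) ∂P)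
            * Cw p.1 q.1 p.2 q.2 := by
      rw [Finset.mul_sum]
      refine Finset.sum_congr rfl fun p _ => ?_
      rw [Finset.mul_sum]
      exact Finset.sum_congr rfl fun q _ => by ring
    rw [hpull, ← mul_assoc, inv_mul_cancel₀ hnne, one_mul]
    have hblocks : ∑ p : Fin 2 × Fin d, ∑ q : Fin 2 × Fin d,
        (∫ ω, (A p.1 ω p.2 - β p.1 p.2) * (A q.1 ω q.2 - β q.1 q.2) ∂P)
          * Cw p.1 q.1 p.2 q.2
        = (∑ j, ∑ k, V 1 j k * Cw 1 1 j k) + (∑ j, ∑ k, V 0 j k * Cw 0 0 j k) := by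
      rw [Fintype.sum_prod_type]
      simp only [Fintype.sum_prod_type]
      rw [Fin.sum_univ_two]
      simp only [Fin.sum_univ_two]
      simp only [hMsame, hMc01, hMc10, zero_mul, Finset.sum_const_zero, add_zero, zero_add]
      rw [add_comm]
    rw [hblocks]
    have htrace : ∀ w : Fin 2, (V w * Matrix.of (fun j k =>
        ∫ ω, Zvec η X W w ⟨0, hn⟩ ω j * Zvec η X W w ⟨0, hn⟩ ω k ∂P)).trace
        = ∑ j, ∑ k, V w j k * Cw w w j k := by
      intro w
      simp only [Matrix.trace, Matrix.diag, Matrix.mul_apply, Matrix.of_apply]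
      refine Finset.sum_congr rfl fun j _ => Finset.sum_congr rfl fun k _ => ?_
      congr 1
      exact integral_congr_ae (ae_of_all _ fun ω => mul_comm _ _)
    rw [htrace 1, htrace 0]
  exact ⟨fun w i j => ⟨hZL2 w i j, hZmean w i j⟩, partI, partII, partIII⟩
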